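/- Let p ≡ 1 (mod 4) be prime, (a,p) = 1, and define S(y) = ∑_{μ=0}^{p-1} ∑_{ν=0}^{p-1} μ χ(ν) ⌊(aμ + ay + ν)/p⌋. If y is a real number such that ay ∉ ℤ, then S(1 − y) = S(y). -/

import Mathlib

open Finset

section aux

variable (p : ℕ) [Fact p.Prime]

private lemma sum_range_eq_sum_zmod (g : ℕ → ℤ) :
    ∑ μ ∈ range p, g μ = ∑ x : ZMod p, g x.val := by
  haveI : NeZero p := ⟨(Fact.out : p.Prime).ne_zero⟩
  refine Finset.sum_nbij' (fun μ => (μ : ZMod p)) (fun x => x.val) ?_ ?_ ?_ ?_ ?_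
  · intro a _; exact Finset.mem_univ _
  · intro x _; exact Finset.mem_range.mpr (ZMod.val_lt x)
  · intro a ha; exact ZMod.val_cast_of_lt (Finset.mem_range.mp ha)
  · intro x _; exact ZMod.natCast_zmod_val x
  · intro a ha; rw [ZMod.val_cast_of_lt (Finset.mem_range.mp ha)]

private lemma sum_range_reindex (e : ZMod p ≃ ZMod p) (g : ℕ → ℤ) :
    ∑ μ ∈ range p, g ((e μ).val) = ∑ μ ∈ range p, g μ := by
  haveI : NeZero p := ⟨(Fact.out : p.Prime).ne_zero⟩
  rw [sum_range_eq_sum_zmod p (fun μ => g ((e μ).val)), sum_range_eq_sum_zmod p g]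
  rw [show (fun x : ZMod p => g ((e ((x.val : ℕ) : ZMod p)).val)) = fun x => g ((e x).val) by
    funext x; rw [ZMod.natCast_zmod_val]]
  exact Equiv.sum_comp e (fun x => g x.val)

private lemma floor_int_add_div (hp : 0 < p) (n : ℤ) (f : ℝ) (hf0 : 0 ≤ f) (hf1 : f < 1) :
    ⌊((n : ℝ) + f) / p⌋ = n / p := by
  have hp' : (0:ℝ) < p := by exact_mod_cast hp
  have hpz : (p:ℤ) ≠ 0 := by exact_mod_cast hp.ne'
  have hmod : n % (p:ℤ) = n - (p:ℤ) * (n / (p:ℤ)) := Int.emod_def n p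
  have : ((n : ℝ) + f) / p = (n / p : ℤ) + (((n % p : ℤ) : ℝ) + f) / p := by
    field_simp
    push_cast [hmod]
    ring
  rw [this, Int.floor_intCast_add]
  have h0 : (0:ℝ) ≤ (((n % p : ℤ) : ℝ) + f) / p := by
    apply div_nonneg _ hp'.le
    have : (0:ℤ) ≤ n % p := Int.emod_nonneg n hpz
    have : (0:ℝ) ≤ ((n % p : ℤ) : ℝ) := by exact_mod_cast this
    linarith
  have h1 : (((n % p : ℤ) : ℝ) + f) / p < 1 := by
    rw [div_lt_one hp']
    have h2 : n % p < p := Int.emod_lt_of_pos n (by exact_mod_cast hp)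
    have : ((n % p : ℤ) : ℝ) ≤ (p : ℝ) - 1 := by
      have : n % p ≤ (p:ℤ) - 1 := by omega
      exact_mod_cast this
    linarith
  rw [Int.floor_eq_zero_iff.mpr ⟨h0, h1⟩, add_zero]

private lemma sum_emod (m : ℤ) :
    ∑ r ∈ range p, ((m + r) % p) = ∑ r ∈ range p, (r : ℤ) := by
  haveI : NeZero p := ⟨(Fact.out : p.Prime).ne_zero⟩
  have key := sum_range_reindex p (Equiv.addLeft (m : ZMod p)) (fun n => (n : ℤ))
  rw [← key]
  refine Finset.sum_congr rfl fun r _ => ?_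
  show (m + (r:ℤ)) % p = ((Equiv.addLeft (m : ZMod p)) (r : ZMod p)).val
  have h1 : ((Equiv.addLeft (m : ZMod p)) (r : ZMod p)) = ((m + r : ℤ) : ZMod p) := by
    simp [Equiv.coe_addLeft]
  rw [h1, ZMod.val_intCast]

private lemma sum_div_int (m : ℤ) : ∑ r ∈ range p, (((r:ℤ) + m) / p) = m := by
  have hp : 0 < p := (Fact.out : p.Prime).pos
  have hpz : (p:ℤ) ≠ 0 := by exact_mod_cast hp.ne'
  have h : (p:ℤ) * ∑ r ∈ range p, (((r:ℤ) + m) / p) = (p:ℤ) * m := by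
    rw [Finset.mul_sum]
    have step : ∀ r ∈ range p, (p:ℤ) * (((r:ℤ) + m) / p) = ((r:ℤ) + m) - ((m + r) % p) := by
      intro r _
      have := Int.mul_ediv_add_emod ((r:ℤ) + m) p
      rw [show (m + (r:ℤ)) % p = ((r:ℤ) + m) % p by rw [add_comm]]
      linarith
    rw [Finset.sum_congr rfl step, Finset.sum_sub_distrib, sum_emod p m,
      Finset.sum_add_distrib]
    simp [mul_comm]
  exact mul_left_cancel₀ hpz h

private lemma hermite (s : ℝ) : ∑ r ∈ range p, ⌊((r:ℝ) + s) / p⌋ = ⌊s⌋ := by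
  have hp : 0 < p := (Fact.out : p.Prime).pos
  have step : ∀ r ∈ range p, ⌊((r:ℝ) + s) / p⌋ = ((r:ℤ) + ⌊s⌋) / p := by
    intro r _
    have h1 : ((r:ℝ) + s) = ((((r:ℤ) + ⌊s⌋ : ℤ)) : ℝ) + Int.fract s := by
      rw [Int.fract]; push_cast; ring
    rw [h1, floor_int_add_div p hp _ _ (Int.fract_nonneg s) (Int.fract_lt_one s)]
  rw [Finset.sum_congr rfl step, sum_div_int p ⌊s⌋]

private lemma cast_ne_zero_of_gcd {a : ℤ} (ha : Int.gcd a p = 1) : (a : ZMod p) ≠ 0 := by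
  intro h
  rw [ZMod.intCast_zmod_eq_zero_iff_dvd] at h
  have h2 : (p:ℤ) ∣ (Int.gcd a p : ℤ) := Int.dvd_coe_gcd h dvd_rfl
  rw [ha] at h2
  have := Int.le_of_dvd one_pos h2
  have := (Fact.out : p.Prime).two_le
  omega

/-- `∑_{μ<p} ⌊(aμ+t)/p⌋ = ∑_{μ<p} (aμ/p) + ⌊t⌋` when `gcd(a,p)=1`. -/
private lemma sum_floor_mul (a : ℤ) (ha : Int.gcd a p = 1) (t : ℝ) :
    ∑ μ ∈ range p, ⌊((a:ℝ) * μ + t) / p⌋ = (∑ μ ∈ range p, (a * μ / p)) + ⌊t⌋ := by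
  have hp : 0 < p := (Fact.out : p.Prime).pos
  haveI : NeZero p := ⟨hp.ne'⟩
  have step : ∀ μ ∈ range p, ⌊((a:ℝ) * μ + t) / p⌋
      = a * μ / p + ⌊(((a * μ % p : ℤ) : ℝ) + t) / p⌋ := by
    intro μ _
    have h1 : ((a:ℝ) * μ + t) / p = ((a * μ / p : ℤ) : ℝ) + (((a * μ % p : ℤ) : ℝ) + t) / p := by
      have hmod : a * μ % (p:ℤ) = a * μ - (p:ℤ) * (a * μ / (p:ℤ)) := Int.emod_def _ p
      have hp' : (p:ℝ) ≠ 0 := by exact_mod_cast hp.ne'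
      field_simp
      push_cast [hmod]
      ring
    rw [h1, Int.floor_intCast_add]
  rw [Finset.sum_congr rfl step, Finset.sum_add_distrib]
  congr 1
  -- reindex the second sum
  set e := Equiv.mulLeft₀ (a : ZMod p) (cast_ne_zero_of_gcd p ha) with he
  have key := sum_range_reindex p e (fun r => ⌊((r:ℝ) + t) / p⌋)
  have step2 : ∀ μ ∈ range p, ⌊(((a * μ % p : ℤ) : ℝ) + t) / p⌋
      = ⌊(((e (μ : ZMod p)).val : ℝ) + t) / p⌋ := by
    intro μ _
    congr 2
    have h1 : e (μ : ZMod p) = ((a * μ : ℤ) : ZMod p) := by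
      show (a : ZMod p) * (μ : ZMod p) = ((a * μ : ℤ) : ZMod p)
      push_cast
      ring
    have h2 : (((e (μ : ZMod p)).val : ℤ)) = a * μ % p := by rw [h1, ZMod.val_intCast]
    have h3 : ((a * (μ:ℤ) % (p:ℤ) : ℤ) : ℝ) = (((e (μ : ZMod p)).val : ℕ) : ℝ) := by
      exact_mod_cast h2.symm
    rw [h3]
  rw [Finset.sum_congr rfl step2, key]
  exact hermite p t

end aux

section chars

variable (p : ℕ) [Fact p.Prime]

private lemma leg_congr {m n : ℤ} (h : (m : ZMod p) = (n : ZMod p)) :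
    legendreSym p m = legendreSym p n := by
  rw [legendreSym, legendreSym, h]

private lemma leg_neg_one (h4 : p % 4 = 1) : legendreSym p (-1) = 1 := by
  have hp2 : p ≠ 2 := by intro h; rw [h] at h4; norm_num at h4
  rw [legendreSym.at_neg_one hp2, ZMod.χ₄_nat_one_mod_four h4]

private lemma leg_neg (h4 : p % 4 = 1) (n : ℤ) : legendreSym p (-n) = legendreSym p n := by
  rw [show -n = -1 * n by ring, legendreSym.mul, leg_neg_one p h4, one_mul]

private lemma sum_leg (hp2 : p ≠ 2) : ∑ ν ∈ range p, legendreSym p (ν : ℕ) = 0 := by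
  haveI : NeZero p := ⟨(Fact.out : p.Prime).ne_zero⟩
  rw [sum_range_eq_sum_zmod p (fun ν => legendreSym p (ν : ℕ))]
  have hcongr : ∀ x : ZMod p, legendreSym p ((x.val : ℕ) : ℤ) = quadraticChar (ZMod p) x := by
    intro x
    rw [legendreSym]
    congr 1
    push_cast
    exact ZMod.natCast_zmod_val x
  rw [Finset.sum_congr rfl (fun x _ => hcongr x)]
  exact quadraticChar_sum_zero (by rw [ZMod.ringChar_zmod_n]; exact hp2)

private lemma sum_mul_leg (h4 : p % 4 = 1) :
    ∑ ν ∈ range p, (ν : ℤ) * legendreSym p (ν : ℕ) = 0 := by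
  haveI : NeZero p := ⟨(Fact.out : p.Prime).ne_zero⟩
  have hp2 : p ≠ 2 := by intro h; rw [h] at h4; norm_num at h4
  set S := ∑ ν ∈ range p, (ν : ℤ) * legendreSym p (ν : ℕ) with hS
  have key := sum_range_reindex p (Equiv.neg (ZMod p))
    (fun ν => (ν : ℤ) * legendreSym p (ν : ℕ))
  have step : ∀ ν ∈ range p,
      ((((Equiv.neg (ZMod p)) (ν : ZMod p)).val : ℤ))
        * legendreSym p ((((Equiv.neg (ZMod p)) (ν : ZMod p)).val : ℕ))
      = ((p : ℤ) - ν) * legendreSym p (ν : ℕ) := by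
    intro ν hν
    have hν' : ν < p := Finset.mem_range.mp hν
    have hval : ((((Equiv.neg (ZMod p)) (ν : ZMod p)).val : ℤ)) = (-(ν:ℤ)) % p := by
      have h1 : ((-(ν:ℤ) : ℤ) : ZMod p) = (Equiv.neg (ZMod p)) (ν : ZMod p) := by
        simp [Equiv.neg_apply]
      have hv := ZMod.val_intCast (n := p) (-(ν:ℤ))
      rw [h1] at hv
      exact hv
    have hleg : legendreSym p ((((Equiv.neg (ZMod p)) (ν : ZMod p)).val : ℕ))
        = legendreSym p (ν : ℕ) := by
      have h2 : (((((Equiv.neg (ZMod p)) (ν : ZMod p)).val : ℕ) : ℤ) : ZMod p)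
          = ((-(ν:ℤ) : ℤ) : ZMod p) := by
        push_cast [ZMod.natCast_zmod_val]
        rfl
      rw [leg_congr p h2, leg_neg p h4]
    rw [hleg, hval]
    rcases Nat.eq_zero_or_pos ν with h0 | h0
    · subst h0
      simp
    · have hb1 : (ν:ℤ) < p := by exact_mod_cast hν'
      have hb2 : (0:ℤ) < ν := by exact_mod_cast h0
      have : (-(ν:ℤ)) % p = (p:ℤ) - ν := by
        rw [show (-(ν:ℤ)) = ((p:ℤ) - ν) + (p:ℤ) * (-1) by ring, Int.add_mul_emod_self_left]
        exact Int.emod_eq_of_lt (by omega) (by omega)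
      rw [this]
  rw [Finset.sum_congr rfl step] at key
  have expand : ∑ ν ∈ range p, ((p:ℤ) - ν) * legendreSym p (ν : ℕ)
      = (p:ℤ) * (∑ ν ∈ range p, legendreSym p (ν : ℕ)) - S := by
    rw [hS, Finset.mul_sum, ← Finset.sum_sub_distrib]
    exact Finset.sum_congr rfl fun ν _ => by ring
  rw [expand, sum_leg p hp2] at key
  linarith [key]

end chars

section main

variable (p : ℕ) [Fact p.Prime]

private lemma ceil_noninteger {x : ℝ} (hx : ∀ m : ℤ, (m:ℝ) ≠ x) : ⌈x⌉ = ⌊x⌋ + 1 := by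
  refine le_antisymm (Int.ceil_le.mpr ?_) ?_
  · push_cast
    exact (Int.lt_floor_add_one x).le
  · by_contra h
    push_neg at h
    have h' : ⌈x⌉ ≤ ⌊x⌋ := by omega
    have h1 : ((⌈x⌉:ℤ):ℝ) ≤ ((⌊x⌋:ℤ):ℝ) := by exact_mod_cast h'
    have h2 := Int.le_ceil x
    have h3 := Int.floor_le x
    exact hx ⌊x⌋ (by linarith)

/-- `T = ∑_ν χ(ν) ∑_μ ⌊(aμ + ay + ν)/p⌋ = 0`. -/
private lemma T_zero (h4 : p % 4 = 1) (a : ℤ) (ha : Int.gcd a p = 1) (y : ℝ) :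
    ∑ ν ∈ range p, (legendreSym p (ν : ℕ)) *
      (∑ μ ∈ range p, ⌊(((a : ℝ) * μ + a * y + ν) / p)⌋) = 0 := by
  have hp2 : p ≠ 2 := by intro h; rw [h] at h4; norm_num at h4
  have inner : ∀ ν : ℕ, ∑ μ ∈ range p, ⌊(((a : ℝ) * μ + a * y + ν) / p)⌋
      = (∑ μ ∈ range p, (a * μ / p)) + ⌊a * y⌋ + ν := by
    intro ν
    have h1 : ∀ μ ∈ range p, ⌊(((a : ℝ) * μ + a * y + ν) / p)⌋
        = ⌊(((a : ℝ) * μ + (a * y + ν)) / p)⌋ := by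
      intro μ _; congr 2; ring
    rw [Finset.sum_congr rfl h1, sum_floor_mul p a ha (a * y + ν)]
    rw [Int.floor_add_natCast]
    ring
  have step : ∀ ν ∈ range p, (legendreSym p (ν : ℕ)) *
      (∑ μ ∈ range p, ⌊(((a : ℝ) * μ + a * y + ν) / p)⌋)
      = (legendreSym p (ν : ℕ)) * ((∑ μ ∈ range p, (a * μ / p)) + ⌊a * y⌋)
        + (ν : ℤ) * legendreSym p (ν : ℕ) := by
    intro ν _
    rw [inner ν]
    ring
  rw [Finset.sum_congr rfl step, Finset.sum_add_distrib, ← Finset.sum_mul,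
    sum_leg p hp2, sum_mul_leg p h4]
  simp

private lemma val_e1 {μ : ℕ} (hμ : μ < p) : (-((μ : ZMod p) + 1)).val = p - 1 - μ := by
  haveI : NeZero p := ⟨(Fact.out : p.Prime).ne_zero⟩
  have hsum : ((p - 1 - μ) + (μ + 1) : ℕ) = p := by
    have := (Fact.out : p.Prime).two_le
    omega
  have hcast : ((p - 1 - μ : ℕ) : ZMod p) = -((μ : ZMod p) + 1) := by
    have h := congrArg (Nat.cast : ℕ → ZMod p) hsum
    push_cast at h
    rw [ZMod.natCast_self] at h
    linear_combination h
  rw [← hcast, ZMod.val_cast_of_lt (by omega)]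

private lemma val_e2 {ν : ℕ} (hν : 0 < ν) (hν' : ν < p) : (-(ν : ZMod p)).val = p - ν := by
  haveI : NeZero p := ⟨(Fact.out : p.Prime).ne_zero⟩
  have hcast : ((p - ν : ℕ) : ZMod p) = -(ν : ZMod p) := by
    have hsum : ((p - ν) + ν : ℕ) = p := by omega
    have h := congrArg (Nat.cast : ℕ → ZMod p) hsum
    push_cast at h
    rw [ZMod.natCast_self] at h
    linear_combination h
  rw [← hcast, ZMod.val_cast_of_lt (by omega)]

private lemma leg_neg_nat (h4 : p % 4 = 1) (ν : ℕ) :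
    legendreSym p (((-(ν : ZMod p)).val : ℕ)) = legendreSym p (ν : ℕ) := by
  haveI : NeZero p := ⟨(Fact.out : p.Prime).ne_zero⟩
  have h2 : ((((-(ν : ZMod p)).val : ℕ) : ℤ) : ZMod p) = ((-(ν:ℤ) : ℤ) : ZMod p) := by
    push_cast [ZMod.natCast_zmod_val]
    rfl
  rw [leg_congr p h2, leg_neg p h4]

end main

/-- `S(y) = ∑_{μ,ν mod p} μ χ(ν) ⌊(aμ + ay + ν)/p⌋`. -/
noncomputable def Ssum (p : ℕ) [Fact p.Prime] (a : ℤ) (y : ℝ) : ℤ :=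
  ∑ μ ∈ Finset.range p, ∑ ν ∈ Finset.range p,
    (μ : ℤ) * legendreSym p ν * ⌊(((a : ℝ) * μ + a * y + ν) / p)⌋

theorem Ssum_one_sub (p : ℕ) [Fact p.Prime] (h4 : p % 4 = 1) (h5 : p ≠ 5)
    (a : ℤ) (ha : Int.gcd a p = 1) (y : ℝ) (hy : ¬ ∃ m : ℤ, (m : ℝ) = a * y) :
    Ssum p a (1 - y) = Ssum p a y := by
  have hp : 0 < p := (Fact.out : p.Prime).pos
  have hp2 : p ≠ 2 := by intro h; rw [h] at h4; norm_num at h4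
  have hple : 2 ≤ p := (Fact.out : p.Prime).two_le
  haveI : NeZero p := ⟨hp.ne'⟩
  push_neg at hy
  set e₁ : ZMod p ≃ ZMod p := (Equiv.addRight (1 : ZMod p)).trans (Equiv.neg (ZMod p)) with he₁
  set e₂ : ZMod p ≃ ZMod p := Equiv.neg (ZMod p) with he₂
  have he₁app : ∀ x : ZMod p, e₁ x = -(x + 1) := by
    intro x
    simp only [he₁, he₂, Equiv.trans_apply, Equiv.coe_addRight, Equiv.neg_apply]
  have he₂app : ∀ x : ZMod p, e₂ x = -x := by intro x; simp [he₂, Equiv.neg_apply]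
  have outer := sum_range_reindex p e₁ (fun μ => ∑ ν ∈ range p,
      (μ : ℤ) * legendreSym p ν * ⌊(((a : ℝ) * μ + a * (1 - y) + ν) / p)⌋)
  have inner : ∀ m : ℕ, ∑ ν ∈ range p,
      (m : ℤ) * legendreSym p ν * ⌊(((a : ℝ) * m + a * (1 - y) + ν) / p)⌋
    = ∑ ν ∈ range p,
      (m : ℤ) * legendreSym p ((e₂ ν).val) * ⌊(((a : ℝ) * m + a * (1 - y) + (e₂ ν).val) / p)⌋ :=
    fun m => (sum_range_reindex p e₂ (fun ν =>
      (m : ℤ) * legendreSym p ν * ⌊(((a : ℝ) * m + a * (1 - y) + ν) / p)⌋)).symm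
  have hS1 : Ssum p a (1 - y) = ∑ μ ∈ range p, ∑ ν ∈ range p,
      (((e₁ μ).val : ℤ)) * legendreSym p ((e₂ ν).val)
        * ⌊(((a : ℝ) * (e₁ μ).val + a * (1 - y) + (e₂ ν).val) / p)⌋ := by
    rw [Ssum, ← outer]
    exact Finset.sum_congr rfl fun μ _ => inner ((e₁ (μ : ZMod p)).val)
  have hterm : ∀ μ ∈ range p, ∀ ν ∈ range p,
      (((e₁ μ).val : ℤ)) * legendreSym p ((e₂ ν).val)
        * ⌊(((a : ℝ) * (e₁ μ).val + a * (1 - y) + (e₂ ν).val) / p)⌋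
      = ((p : ℤ) - 1 - μ) * legendreSym p ν *
          (a - ⌊(((a : ℝ) * μ + a * y + ν) / p)⌋) := by
    intro μ hμ ν hν
    have hμ' : μ < p := Finset.mem_range.mp hμ
    have hν' : ν < p := Finset.mem_range.mp hν
    rw [he₁app, he₂app, val_e1 p hμ', leg_neg_nat p h4 ν]
    have c3 : ((p - 1 - μ : ℕ) : ℤ) = (p : ℤ) - 1 - μ := by
      rw [Nat.sub_sub, Nat.cast_sub (by omega)]; push_cast; ring
    rcases Nat.eq_zero_or_pos ν with h0 | h0
    · subst h0
      simp [legendreSym.at_zero]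
    · rw [val_e2 p h0 hν']
      have hpR : (p : ℝ) ≠ 0 := by exact_mod_cast hp.ne'
      have hx : ∀ m : ℤ, (m : ℝ) ≠ ((a : ℝ) * μ + a * y + ν) / p := by
        intro m hm
        apply hy ((m * p - a * μ - ν : ℤ))
        rw [eq_div_iff hpR] at hm
        push_cast
        linarith
      have c1 : ((p - 1 - μ : ℕ) : ℝ) = (p : ℝ) - 1 - μ := by
        rw [Nat.sub_sub, Nat.cast_sub (by omega)]; push_cast; ring
      have c2 : ((p - ν : ℕ) : ℝ) = (p : ℝ) - ν := by
        rw [Nat.cast_sub (by omega)]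
      have harg : ((a : ℝ) * ((p - 1 - μ : ℕ) : ℝ) + a * (1 - y) + ((p - ν : ℕ) : ℝ)) / p
          = ((a + 1 : ℤ) : ℝ) + (-(((a : ℝ) * μ + a * y + ν) / p)) := by
        rw [c1, c2]
        push_cast
        field_simp
        ring
      rw [harg, Int.floor_intCast_add, Int.floor_neg, ceil_noninteger hx, c3]
      ring
  have hS2 : Ssum p a (1 - y) = ∑ μ ∈ range p, ∑ ν ∈ range p,
      (((p : ℤ) - 1 - μ) * legendreSym p ν *
          (a - ⌊(((a : ℝ) * μ + a * y + ν) / p)⌋)) := by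
    rw [hS1]
    exact Finset.sum_congr rfl fun μ hμ => Finset.sum_congr rfl fun ν hν => hterm μ hμ ν hν
  have hsplit : ∑ μ ∈ range p, ∑ ν ∈ range p,
      (((p : ℤ) - 1 - μ) * legendreSym p ν *
          (a - ⌊(((a : ℝ) * μ + a * y + ν) / p)⌋))
      = (∑ μ ∈ range p, (a * ((p : ℤ) - 1 - μ)) * (∑ ν ∈ range p, legendreSym p (ν : ℕ)))
        - ((p : ℤ) - 1) * (∑ ν ∈ range p, (legendreSym p (ν : ℕ))
            * (∑ μ ∈ range p, ⌊(((a : ℝ) * μ + a * y + ν) / p)⌋))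
        + Ssum p a y := by
    have e1 : ∀ μ ∈ range p, (a * ((p : ℤ) - 1 - μ)) * (∑ ν ∈ range p, legendreSym p (ν : ℕ))
        = ∑ ν ∈ range p, (a * ((p : ℤ) - 1 - μ)) * legendreSym p (ν : ℕ) :=
      fun μ _ => Finset.mul_sum _ _ _
    have e2 : ((p : ℤ) - 1) * (∑ ν ∈ range p, (legendreSym p (ν : ℕ))
            * (∑ μ ∈ range p, ⌊(((a : ℝ) * μ + a * y + ν) / p)⌋))
        = ∑ μ ∈ range p, ∑ ν ∈ range p,
            ((p : ℤ) - 1) * (legendreSym p (ν : ℕ) * ⌊(((a : ℝ) * μ + a * y + ν) / p)⌋) := by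
      rw [Finset.mul_sum]
      rw [Finset.sum_comm]
      exact Finset.sum_congr rfl fun ν _ => by rw [Finset.mul_sum, Finset.mul_sum]
    rw [Finset.sum_congr rfl e1, e2, Ssum, ← Finset.sum_sub_distrib, ← Finset.sum_add_distrib]
    refine Finset.sum_congr rfl fun μ _ => ?_
    rw [← Finset.sum_sub_distrib, ← Finset.sum_add_distrib]
    refine Finset.sum_congr rfl fun ν _ => ?_
    ring
  rw [hS2, hsplit, sum_leg p hp2, T_zero p h4 a ha y]
  simp
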